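/- Let n = 2p with p an odd prime, and let f be a homogeneous rotation symmetric Boolean function of even degree d = 2k > 2, written as f = (⊕_{i=1}^{s} f_i) ⊕ (⊕_{i=s+1}^{l} f_i) where f₁,…,f_s are short-cycle MRS functions and f_{s+1},…,f_l are full-cycle MRS functions with f_i generated by x₀x_{a_{i₁}}⋯x_{a_{i,d-1}}. If for every full-cycle f_i the number r of odd indices among {a_{i₁},…,a_{i,d-1}} satisfies 2 ≤ r ≤ d-2, then f is not bent. -/

import Mathlib

def chi (a : ZMod 2) : ℤ := (-1)^a.val

lemma chi_add (a b : ZMod 2) : chi (a+b) = chi a * chi b := by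
  revert a b; decide

lemma chi_zero : chi 0 = 1 := by decide

lemma chi_abs (a : ZMod 2) : |chi a| = 1 := by
  revert a; decide

lemma chi_sum {α : Type*} (s : Finset α) (g : α → ZMod 2) :
    chi (∑ i ∈ s, g i) = ∏ i ∈ s, chi (g i) := by
  classical
  induction s using Finset.induction with
  | empty => simp [chi]
  | insert _ _ h ih => rw [Finset.sum_insert h, Finset.prod_insert h, chi_add, ih]

lemma orth {α : Type*} [Fintype α] [DecidableEq α] (y : α → ZMod 2) :
    ∑ v : α → ZMod 2, chi (∑ t, v t * y t) =
      if ∀ t, y t = 0 then 2 ^ Fintype.card α else 0 := by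
  have h1 : ∀ v : α → ZMod 2, chi (∑ t, v t * y t) = ∏ t, chi (v t * y t) :=
    fun v => chi_sum _ _
  simp_rw [h1]
  rw [← Fintype.prod_sum (fun t b => chi (b * y t))]
  have h2 : ∀ c : ZMod 2, ∑ b : ZMod 2, chi (b * c) = if c = 0 then 2 else 0 := by decide
  simp_rw [h2]
  by_cases h : ∀ t, y t = 0
  · simp [h, Finset.prod_const]
  · have h0 : (∏ x : α, if y x = 0 then (2:ℤ) else 0) = 0 := by
      obtain ⟨t, ht⟩ := not_forall.mp h
      exact Finset.prod_eq_zero (Finset.mem_univ t) (by rw [if_neg ht])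
    rw [h0, if_neg h]


-- invariance under full even subgroup
open Fin.NatCast in
lemma even_inv_claim (p : ℕ) (hp : p.Prime) (hp2 : 2 < p) [NeZero (2*p)]
    (S : Finset (Fin (2*p)))
    (c : Fin (2*p)) (hce : c.val % 2 = 0) (hc0 : c.val ≠ 0)
    (hinv : S.image (· + c) = S) :
    ∀ t ∈ S, ∀ u : Fin (2*p), u.val % 2 = t.val % 2 → u ∈ S := by
  have hone : ∀ x ∈ S, x + c ∈ S := by
    intro x hx; rw [← hinv]; exact Finset.mem_image_of_mem _ hx
  have hmult : ∀ m : ℕ, ∀ x ∈ S, x + ((m * c.val : ℕ) : Fin (2*p)) ∈ S := by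
    intro m
    induction m with
    | zero => intro x hx; simpa using hx
    | succ m ih =>
      intro x hx
      have h1 : (((m+1) * c.val : ℕ) : Fin (2*p)) = ((m * c.val : ℕ) : Fin (2*p)) + c := by
        have : (m+1) * c.val = m * c.val + c.val := by ring
        rw [this, Nat.cast_add, Fin.cast_val_eq_self]
      rw [h1, ← add_assoc]
      exact hone _ (ih x hx)
  intro t ht u hu
  haveI : Fact p.Prime := ⟨hp⟩
  set c0 := c.val / 2 with hc0def
  have hcv : c.val < 2*p := c.isLt
  have hc2 : c.val = 2 * c0 := by omega
  have hc0p : 0 < c0 ∧ c0 < p := by omega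
  have hunit : (c0 : ZMod p) ≠ 0 := by
    rw [Ne, ZMod.natCast_eq_zero_iff]
    intro hdvd
    have := Nat.le_of_dvd hc0p.1 hdvd
    omega
  set e := (u.val + 2*p - t.val) / 2 with hedef
  have hu2 : u.val < 2*p := u.isLt
  have ht2 : t.val < 2*p := t.isLt
  have he : 2 * e = u.val + 2*p - t.val := by omega
  set m := ((e : ZMod p) * (c0 : ZMod p)⁻¹).val with hmdef
  have hm : ((m * c0 : ℕ) : ZMod p) = ((e : ℕ) : ZMod p) := by
    push_cast
    rw [hmdef, ZMod.natCast_val, ZMod.cast_id, mul_assoc, inv_mul_cancel₀ hunit, mul_one]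
  have hmod : m * c0 ≡ e [MOD p] := (ZMod.natCast_eq_natCast_iff _ _ _).mp hm
  have hmod2 : m * c.val ≡ u.val + 2*p - t.val [MOD 2*p] := by
    have h2 := hmod.mul_left' 2
    have e1 : 2 * (m * c0) = m * c.val := by rw [hc2]; ring
    have e2 : 2 * e = u.val + 2*p - t.val := he
    rwa [e1, e2] at h2
  have hmem := hmult m t ht
  have heq : t + ((m * c.val : ℕ) : Fin (2*p)) = u := by
    apply Fin.ext
    rw [Fin.val_add, Fin.val_natCast]
    have step1 : t.val + (m * c.val) % (2*p) ≡ t.val + m * c.val [MOD 2*p] :=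
      Nat.ModEq.add_left _ (Nat.mod_modEq _ _)
    have step2 : t.val + m * c.val ≡ t.val + (u.val + 2*p - t.val) [MOD 2*p] :=
      Nat.ModEq.add_left _ hmod2
    have step3 : t.val + (u.val + 2*p - t.val) = u.val + 2*p := by omega
    have step4 : u.val + 2*p ≡ u.val [MOD 2*p] := Nat.add_modEq_right
    have chain : t.val + (m * c.val) % (2*p) ≡ u.val [MOD 2*p] :=
      step1.trans (step2.trans (by rw [step3]; exact step4))
    have : (t.val + (m * c.val) % (2*p)) % (2*p) = u.val % (2*p) := chain
    rw [this, Nat.mod_eq_of_lt hu2]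
  rwa [heq] at hmem

lemma card_range_odd (n : ℕ) :
    ((Finset.range n).filter (fun i => i % 2 = 1)).card = n / 2 := by
  induction n with
  | zero => simp
  | succ n ih =>
    rw [Finset.range_add_one, Finset.filter_insert]
    by_cases h : n % 2 = 1
    · rw [if_pos h, Finset.card_insert_of_notMem (by simp)]
      omega
    · rw [if_neg h]; omega

lemma card_fin_odd (m : ℕ) [NeZero m] :
    (Finset.univ.filter (fun t : Fin m => t.val % 2 = 1)).card = m / 2 := by
  rw [Finset.card_filter]
  rw [Fin.sum_univ_eq_sum_range (fun i => if i % 2 = 1 then 1 else 0)]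
  rw [← Finset.card_filter]
  exact card_range_odd m

lemma translate_parity_card (p : ℕ) [NeZero (2*p)] (S : Finset (Fin (2*p))) (j : Fin (2*p)) :
    ((S.image (· + j)).filter (fun t : Fin (2*p) => t.val % 2 = 1)).card
      = (S.filter (fun t => (t.val + j.val) % 2 = 1)).card := by
  rw [Finset.filter_image, Finset.card_image_of_injective _ (add_left_injective j)]
  congr 1
  apply Finset.filter_congr
  intro t _
  have h : (t + j).val % 2 = (t.val + j.val) % 2 := by
    rw [Fin.val_add]; exact Nat.mod_mod_of_dvd _ ⟨p, rfl⟩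
  simp only [h]


lemma key_claim (p k : ℕ) (hp : p.Prime) (hp2 : 2 < p) (hk : 1 < k) [NeZero (2*p)]
    (S : Finset (Fin (2*p))) (hcard : S.card = 2*k)
    (c : Fin (2*p)) (hc : c ≠ 0) (hinv : S.image (· + c) = S) :
    2 ≤ (S.filter (fun t => t.val % 2 = 1)).card ∧
    2 ≤ (S.filter (fun t => t.val % 2 = 0)).card := by
  have hcv : c.val < 2*p := c.isLt
  have hcne : c.val ≠ 0 := by
    intro h; exact hc (Fin.ext (by simpa using h))
  have hflip : S.filter (fun t => t.val % 2 = 0) = S.filter (fun t => ¬ (t.val % 2 = 1)) := by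
    apply Finset.filter_congr; intro t _; constructor <;> (intro h; omega)
  have hsum : (S.filter (fun t => t.val % 2 = 1)).card
      + (S.filter (fun t => t.val % 2 = 0)).card = 2*k := by
    rw [← hcard, hflip]
    exact Finset.card_filter_add_card_filter_not _
  by_cases hce : c.val % 2 = 1
  · have h1 := translate_parity_card p S c
    rw [hinv] at h1
    have h2 : S.filter (fun t => (t.val + c.val) % 2 = 1)
        = S.filter (fun t => t.val % 2 = 0) := by
      apply Finset.filter_congr; intro t _; constructor <;> (intro h; omega)
    rw [h2] at h1
    omega
  · have hce0 : c.val % 2 = 0 := by omega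
    have hclaim := even_inv_claim p hp hp2 S c hce0 hcne hinv
    have hpodd : p % 2 = 1 := Nat.odd_iff.mp (hp.odd_of_ne_two (by omega))
    have hOd : (Finset.univ.filter (fun t : Fin (2*p) => t.val % 2 = 1)).card = p := by
      rw [card_fin_odd]; omega
    have hEv : (Finset.univ.filter (fun t : Fin (2*p) => t.val % 2 = 0)).card = p := by
      have h3 := Finset.card_filter_add_card_filter_not
        (s := (Finset.univ : Finset (Fin (2*p)))) (p := fun t : Fin (2*p) => t.val % 2 = 1)
      have h4 : (Finset.univ.filter (fun t : Fin (2*p) => ¬ (t.val % 2 = 1)))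
          = Finset.univ.filter (fun t : Fin (2*p) => t.val % 2 = 0) := by
        apply Finset.filter_congr; intro t _; constructor <;> (intro h; omega)
      rw [h4, hOd] at h3
      have h5 : (Finset.univ : Finset (Fin (2*p))).card = 2*p := by simp
      omega
    have hall : ∀ b : ℕ, (∃ a ∈ S, a.val % 2 = b) →
        S.filter (fun t => t.val % 2 = b) = Finset.univ.filter (fun t : Fin (2*p) => t.val % 2 = b) := by
      rintro b ⟨a, ha, hab⟩
      apply Finset.Subset.antisymm
      · exact Finset.filter_subset_filter _ (Finset.subset_univ S)
      · intro u hu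
        rw [Finset.mem_filter] at hu ⊢
        exact ⟨hclaim a ha u (by omega), hu.2⟩
    have main : ∀ b : ℕ, b < 2 → 2 ≤ (S.filter (fun t => t.val % 2 = b)).card := by
      intro b hb
      by_cases hex : ∃ a ∈ S, a.val % 2 = b
      · rw [hall b hex]
        interval_cases b
        · rw [hEv]; omega
        · rw [hOd]; omega
      · push_neg at hex
        have hSne : S.Nonempty := Finset.card_pos.mp (by omega)
        obtain ⟨t0, ht0⟩ := hSne
        have hex2 : ∃ a ∈ S, a.val % 2 = 1 - b := by
          refine ⟨t0, ht0, ?_⟩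
          have h6 := hex t0 ht0
          omega
        have hSeq : S.filter (fun t => t.val % 2 = 1 - b) = S :=
          Finset.filter_true_of_mem (fun t ht => by have := hex t ht; omega)
        have h7 := hall (1-b) hex2
        rw [hSeq] at h7
        have hcS : S.card = p := by
          rw [h7]
          interval_cases b
          · simpa using hOd
          · simpa using hEv
        omega
    exact ⟨main 1 (by omega), main 0 (by omega)⟩


lemma parity_card_sum (m : ℕ) (S : Finset (Fin m)) :
    (S.filter (fun t => t.val % 2 = 1)).card + (S.filter (fun t => t.val % 2 = 0)).card
      = S.card := by
  have hflip : S.filter (fun t => t.val % 2 = 0) = S.filter (fun t => ¬ (t.val % 2 = 1)) := by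
    apply Finset.filter_congr; intro t _; constructor <;> (intro h; omega)
  rw [hflip]; exact Finset.card_filter_add_card_filter_not _

lemma short_cycle_inv (p : ℕ) [NeZero (2*p)] (hp0 : 0 < p) (S : Finset (Fin (2*p)))
    (hshort : (Finset.univ.image (fun j : Fin (2*p) => S.image (· + j))).card < 2*p) :
    ∃ c : Fin (2*p), c ≠ 0 ∧ S.image (· + c) = S := by
  have hninj : ¬ Function.Injective (fun j : Fin (2*p) => S.image (· + j)) := by
    intro hinj
    rw [Finset.card_image_of_injective _ hinj, Finset.card_univ, Fintype.card_fin] at hshort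
    omega
  rw [Function.not_injective_iff] at hninj
  obtain ⟨a, b, hab, hne⟩ := hninj
  refine ⟨a - b, sub_ne_zero.mpr hne, ?_⟩
  have h1 : (S.image (· + a)).image (· + (-b)) = (S.image (· + b)).image (· + (-b)) := by
    rw [hab]
  rw [Finset.image_image, Finset.image_image] at h1
  have e1 : ((· + (-b)) ∘ (· + a)) = fun x : Fin (2*p) => x + (a - b) := by
    funext x
    simp only [Function.comp_apply]
    rw [sub_eq_add_neg, ← add_assoc]
  have e2 : ((· + (-b)) ∘ (· + b)) = id := by
    funext x
    simp
  rw [e1, e2, Finset.image_id] at h1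
  exact h1

lemma translate_two_odd (p : ℕ) [NeZero (2*p)] (S : Finset (Fin (2*p)))
    (h1 : 2 ≤ (S.filter (fun t => t.val % 2 = 1)).card)
    (h0 : 2 ≤ (S.filter (fun t => t.val % 2 = 0)).card)
    (j : Fin (2*p)) :
    2 ≤ ((S.image (· + j)).filter (fun t : Fin (2*p) => t.val % 2 = 1)).card := by
  rw [translate_parity_card]
  by_cases hj : j.val % 2 = 0
  · have e : S.filter (fun t => (t.val + j.val) % 2 = 1)
        = S.filter (fun t => t.val % 2 = 1) := by
      apply Finset.filter_congr; intro t _; constructor <;> (intro h; omega)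
    rw [e]; exact h1
  · have e : S.filter (fun t => (t.val + j.val) % 2 = 1)
        = S.filter (fun t => t.val % 2 = 0) := by
      apply Finset.filter_congr; intro t _; constructor <;> (intro h; omega)
    rw [e]; exact h0

lemma master (p : ℕ) (hp2 : 2 < p) [NeZero (2*p)]
    (f : (Fin (2*p) → ZMod 2) → ZMod 2)
    (hfzero : ∀ x : Fin (2*p) → ZMod 2,
      (∀ t : Fin (2*p), (t.val % 2 = 1 ∧ t.val ≠ 2*p - 1) → x t = 0) → f x = 0)
    (H : ∀ w : Fin (2*p) → ZMod 2,
      (∑ x : Fin (2*p) → ZMod 2, chi (f x + ∑ i, w i * x i)) = 2^p ∨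
      (∑ x : Fin (2*p) → ZMod 2, chi (f x + ∑ i, w i * x i)) = -(2^p)) :
    False := by
  classical
  set Kp : Fin (2*p) → Prop := fun t => t.val % 2 = 1 ∧ t.val ≠ 2*p - 1 with hKp
  have hW : ∀ w : Fin (2*p) → ZMod 2,
      |∑ x : Fin (2*p) → ZMod 2, chi (f x + ∑ i, w i * x i)| = 2^p := by
    intro w
    rcases H w with h | h <;> rw [h]
    · exact abs_of_nonneg (by positivity)
    · rw [abs_neg]; exact abs_of_nonneg (by positivity)
  have cardKfilter : (Finset.univ.filter Kp).card = p - 1 := by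
    have hlt : 2*p - 1 < 2*p := by omega
    have heq : Finset.univ.filter Kp
        = (Finset.univ.filter (fun t : Fin (2*p) => t.val % 2 = 1)).erase ⟨2*p-1, hlt⟩ := by
      ext t
      simp only [Finset.mem_erase, Finset.mem_filter, Finset.mem_univ, true_and, hKp,
        Ne, Fin.ext_iff]
      tauto
    rw [heq, Finset.card_erase_of_mem, card_fin_odd]
    · omega
    · simp only [Finset.mem_filter, Finset.mem_univ, true_and]
      omega
  have cardK : Fintype.card {t : Fin (2*p) // Kp t} = p - 1 := by
    rw [Fintype.card_subtype]; exact cardKfilter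
  have cardNK : (Finset.univ.filter (fun t => ¬ Kp t)).card = p + 1 := by
    have h1 := Finset.card_filter_add_card_filter_not
      (s := (Finset.univ : Finset (Fin (2*p)))) (p := Kp)
    have h2 : (Finset.univ : Finset (Fin (2*p))).card = 2*p := by simp
    omega
  set E := Finset.univ.filter (fun x : Fin (2*p) → ZMod 2 => ∀ t, Kp t → x t = 0) with hE
  have cardE : E.card = 2^(p+1) := by
    have hEpi : E = Fintype.piFinset
        (fun t : Fin (2*p) => if Kp t then ({0} : Finset (ZMod 2)) else Finset.univ) := by
      ext x
      simp only [hE, Finset.mem_filter, Finset.mem_univ, true_and, Fintype.mem_piFinset]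
      constructor
      · intro h t
        by_cases ht : Kp t
        · rw [if_pos ht]; simp [h t ht]
        · rw [if_neg ht]; simp
      · intro h t ht
        have := h t
        rw [if_pos ht] at this
        simpa using this
    rw [hEpi, Fintype.card_piFinset]
    have hcard : ∀ t : Fin (2*p),
        (if Kp t then ({0} : Finset (ZMod 2)) else Finset.univ).card
          = if Kp t then 1 else 2 := by
      intro t; split <;> simp
    simp_rw [hcard]
    rw [Finset.prod_ite, Finset.prod_const, Finset.prod_const, one_pow, one_mul, cardNK]
  set ext : ({t : Fin (2*p) // Kp t} → ZMod 2) → (Fin (2*p) → ZMod 2) :=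
    fun v t => if h : Kp t then v ⟨t, h⟩ else 0 with hext
  have hinner : ∀ (v : {t : Fin (2*p) // Kp t} → ZMod 2) (x : Fin (2*p) → ZMod 2),
      ∑ i, ext v i * x i = ∑ t : {t : Fin (2*p) // Kp t}, v t * x ↑t := by
    intro v x
    have h0 : ∀ t : {t : Fin (2*p) // Kp t}, v t * x ↑t = ext v ↑t * x ↑t := by
      intro t
      congr 1
      simp only [hext]
      rw [dif_pos t.2]
    rw [Finset.sum_congr rfl (fun t _ => h0 t), ← Finset.subtype_univ,
      Finset.sum_subtype_eq_sum_filter (fun i => ext v i * x i)]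
    exact (Finset.sum_subset (Finset.filter_subset _ _) (fun i _ hi => by
      have hni : ¬ Kp i := by simpa using hi
      simp [hext, hni])).symm
  have horth : ∀ x : Fin (2*p) → ZMod 2,
      (∑ v : {t : Fin (2*p) // Kp t} → ZMod 2, chi (∑ t, v t * x ↑t))
        = if (∀ t, Kp t → x t = 0) then 2^(p-1) else 0 := by
    intro x
    rw [orth (fun t : {t : Fin (2*p) // Kp t} => x ↑t), cardK]
    congr 1
    · rw [eq_iff_iff]
      exact ⟨fun h t ht => h ⟨t, ht⟩, fun h t => h ↑t t.2⟩
  have hSigma : (∑ v : {t : Fin (2*p) // Kp t} → ZMod 2,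
      ∑ x : Fin (2*p) → ZMod 2, chi (f x + ∑ i, ext v i * x i)) = 2^(2*p) := by
    have step1 : ∀ v : {t : Fin (2*p) // Kp t} → ZMod 2,
        (∑ x : Fin (2*p) → ZMod 2, chi (f x + ∑ i, ext v i * x i))
          = ∑ x : Fin (2*p) → ZMod 2, chi (f x) * chi (∑ t, v t * x ↑t) := by
      intro v
      apply Finset.sum_congr rfl
      intro x _
      rw [hinner v x, chi_add]
    simp_rw [step1]
    rw [Finset.sum_comm]
    have step2 : ∀ x : Fin (2*p) → ZMod 2,
        (∑ v : {t : Fin (2*p) // Kp t} → ZMod 2, chi (f x) * chi (∑ t, v t * x ↑t))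
          = chi (f x) * (if (∀ t, Kp t → x t = 0) then 2^(p-1) else 0) := by
      intro x
      rw [← Finset.mul_sum, horth x]
    simp_rw [step2]
    have step3 : ∀ x : Fin (2*p) → ZMod 2,
        chi (f x) * (if (∀ t, Kp t → x t = 0) then (2:ℤ)^(p-1) else 0)
          = if (∀ t, Kp t → x t = 0) then chi (f x) * 2^(p-1) else 0 := by
      intro x; split <;> ring
    simp_rw [step3]
    rw [← Finset.sum_filter]
    have step4 : ∀ x ∈ E, chi (f x) * (2:ℤ)^(p-1) = 2^(p-1) := by
      intro x hx
      simp only [hE, Finset.mem_filter] at hx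
      rw [hfzero x hx.2, chi_zero, one_mul]
    rw [Finset.sum_congr rfl step4, Finset.sum_const, cardE, nsmul_eq_mul]
    push_cast
    rw [← pow_add]
    congr 1
    omega
  have hcardFun : Fintype.card ({t : Fin (2*p) // Kp t} → ZMod 2) = 2^(p-1) := by
    rw [Fintype.card_fun, cardK, ZMod.card]
  have hbound : |(∑ v : {t : Fin (2*p) // Kp t} → ZMod 2,
      ∑ x : Fin (2*p) → ZMod 2, chi (f x + ∑ i, ext v i * x i))| ≤ 2^(p-1) * 2^p := by
    calc |(∑ v : {t : Fin (2*p) // Kp t} → ZMod 2,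
        ∑ x : Fin (2*p) → ZMod 2, chi (f x + ∑ i, ext v i * x i))|
        ≤ ∑ v : {t : Fin (2*p) // Kp t} → ZMod 2,
            |∑ x : Fin (2*p) → ZMod 2, chi (f x + ∑ i, ext v i * x i)| :=
          Finset.abs_sum_le_sum_abs _ _
      _ = ∑ _v : {t : Fin (2*p) // Kp t} → ZMod 2, (2:ℤ)^p :=
          Finset.sum_congr rfl (fun v _ => hW (ext v))
      _ = 2^(p-1) * 2^p := by
          rw [Finset.sum_const, Finset.card_univ, hcardFun, nsmul_eq_mul]
          push_cast
          ring
  rw [hSigma] at hbound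
  rw [abs_of_nonneg (by positivity : (0:ℤ) ≤ 2^(2*p))] at hbound
  rw [← pow_add] at hbound
  have hle := (pow_le_pow_iff_right₀ (by norm_num : (1:ℤ) < 2)).mp hbound
  exact absurd hle (by clear * - hp2; omega)

/-- Let `n = 2p` (`p` odd prime) and let `f` be a homogeneous rotation
symmetric function of even degree `d = 2k > 2`, a sum of MRS components `f_i` with
monomial index sets `S i ∋ 0` of size `d`, where components `i < s` are short-cycle
and components `i ≥ s` are full-cycle. If every full-cycle component has a number `r`
of odd indices with `2 ≤ r ≤ d - 2`, then `f` is not bent. -/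

theorem stmt19 (p k s l : ℕ) (hp : p.Prime) (hp2 : 2 < p) (hk : 1 < k) (hsl : s ≤ l)
    (S : Fin l → Finset (Fin (2*p)))
    (hS0 : ∀ i, (⟨0, by omega⟩ : Fin (2*p)) ∈ S i)
    (hdeg : ∀ i, (S i).card = 2*k)
    (hshort : ∀ i : Fin l, i.val < s →
      (Finset.univ.image (fun j : Fin (2*p) => (S i).image (· + j))).card < 2*p)
    (hfull : ∀ i : Fin l, s ≤ i.val →
      (Finset.univ.image (fun j : Fin (2*p) => (S i).image (· + j))).card = 2*p)
    (hodd : ∀ i : Fin l, s ≤ i.val →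
      2 ≤ ((S i).filter (fun j => j.val % 2 = 1)).card ∧
      ((S i).filter (fun j => j.val % 2 = 1)).card ≤ 2*k - 2) :
    ¬ (∀ w : Fin (2*p) → ZMod 2,
      (∑ x : Fin (2*p) → ZMod 2,
        (-1 : ℤ) ^ (((∑ i : Fin l, ∑ T ∈ Finset.univ.image
              (fun j : Fin (2*p) => (S i).image (· + j)), ∏ t ∈ T, x t)
          + ∑ i, w i * x i).val)) = 2 ^ p ∨
      (∑ x : Fin (2*p) → ZMod 2,
        (-1 : ℤ) ^ (((∑ i : Fin l, ∑ T ∈ Finset.univ.image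
              (fun j : Fin (2*p) => (S i).image (· + j)), ∏ t ∈ T, x t)
          + ∑ i, w i * x i).val)) = -(2 ^ p)) := by
  intro H
  haveI : NeZero (2*p) := ⟨by omega⟩
  have hmono : ∀ i : Fin l, ∀ T ∈ Finset.univ.image (fun j : Fin (2*p) => (S i).image (· + j)),
      2 ≤ (T.filter (fun t : Fin (2*p) => t.val % 2 = 1)).card := by
    intro i T hT
    rw [Finset.mem_image] at hT
    obtain ⟨j, -, rfl⟩ := hT
    by_cases hi : i.val < s
    · obtain ⟨c, hc, hinv⟩ := short_cycle_inv p (by omega) (S i) (hshort i hi)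
      obtain ⟨ho, he⟩ := key_claim p k hp hp2 hk (S i) (hdeg i) c hc hinv
      exact translate_two_odd p (S i) ho he j
    · have hoi := hodd i (by omega)
      have hsum := parity_card_sum (2*p) (S i)
      rw [hdeg i] at hsum
      exact translate_two_odd p (S i) hoi.1 (by omega) j
  have hfzero : ∀ x : Fin (2*p) → ZMod 2,
      (∀ t : Fin (2*p), (t.val % 2 = 1 ∧ t.val ≠ 2*p - 1) → x t = 0) →
      (∑ i : Fin l, ∑ T ∈ Finset.univ.image
        (fun j : Fin (2*p) => (S i).image (· + j)), ∏ t ∈ T, x t) = 0 := by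
    intro x hx
    apply Finset.sum_eq_zero
    intro i _
    apply Finset.sum_eq_zero
    intro T hT
    have h2 := hmono i T hT
    obtain ⟨a, ha, b, hb, hab⟩ := Finset.one_lt_card.mp
      (by omega : 1 < (T.filter (fun t : Fin (2*p) => t.val % 2 = 1)).card)
    rw [Finset.mem_filter] at ha hb
    by_cases hA : a.val ≠ 2*p - 1
    · exact Finset.prod_eq_zero ha.1 (hx a ⟨ha.2, hA⟩)
    · push_neg at hA
      have hB : b.val ≠ 2*p - 1 := by
        intro hBB
        exact hab (Fin.ext (by rw [hA, hBB]))
      exact Finset.prod_eq_zero hb.1 (hx b ⟨hb.2, hB⟩)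
  exact master p hp2
    (fun x => ∑ i : Fin l, ∑ T ∈ Finset.univ.image
      (fun j : Fin (2*p) => (S i).image (· + j)), ∏ t ∈ T, x t)
    hfzero H
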